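/- Let Ω be a finite set, let G be a primitive subgroup of Sym(Ω), and let 𝒫 be a non-trivial G-regular partition of Ω. Then 𝒫 has at least 3 parts and every part of 𝒫 has at least 3 elements. -/

import Mathlib

/-- A section of a partition: a set containing exactly one element of each part. -/
def IsSection {Ω : Type*} (P : Set (Set Ω)) (S : Set Ω) : Prop :=
  ∀ B ∈ P, ∃! x, x ∈ S ∧ x ∈ B

/-- A partition is `G`-regular if it admits a section `S` such that `Sg` is a
section for every `g ∈ G`. -/
def IsGRegular {Ω : Type*} (G : Subgroup (Equiv.Perm Ω)) (P : Set (Set Ω)) : Prop :=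
  ∃ S : Set Ω, IsSection P S ∧ ∀ g ∈ G, IsSection P ((⇑g) '' S)

/-- The trivial partitions: the one-block partition and the partition into singletons. -/
def IsTrivialPartition {Ω : Type*} (P : Set (Set Ω)) : Prop :=
  P = {Set.univ} ∨ P = Set.range (fun x : Ω => ({x} : Set Ω))

/-- A permutation group is transitive if any point can be mapped to any other. -/
def IsTransitivePermGroup {Ω : Type*} (G : Subgroup (Equiv.Perm Ω)) : Prop :=
  ∀ a b : Ω, ∃ g ∈ G, g a = b

/-- A partition is `G`-invariant if `G` permutes its parts. -/
def IsInvariantPartition {Ω : Type*} (G : Subgroup (Equiv.Perm Ω)) (P : Set (Set Ω)) : Prop :=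
  ∀ g ∈ G, ∀ B ∈ P, (⇑g) '' B ∈ P

/-- A permutation group is primitive if it is transitive and preserves no
non-trivial partition. -/
def IsPrimitivePermGroup {Ω : Type*} (G : Subgroup (Equiv.Perm Ω)) : Prop :=
  IsTransitivePermGroup G ∧
    ∀ P : Set (Set Ω), Setoid.IsPartition P → IsInvariantPartition G P → IsTrivialPartition P

/-- A permutation group is synchronizing if it is non-trivial and its only
`G`-regular partitions are the trivial ones. -/
def IsSynchronizing {Ω : Type*} (G : Subgroup (Equiv.Perm Ω)) : Prop :=
  G ≠ ⊥ ∧ ∀ P : Set (Set Ω), Setoid.IsPartition P → IsGRegular G P → IsTrivialPartition P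

section AuxLemmas

variable {Ω : Type*}

/-- A non-trivial partition forces the ground set to have three distinct elements. -/
lemma exists_three_distinct {P : Set (Set Ω)} (hP : Setoid.IsPartition P)
    (hnt : ¬ (P = {Set.univ} ∨ P = Set.range (fun x : Ω => ({x} : Set Ω)))) :
    ∃ x y z : Ω, x ≠ y ∧ x ≠ z ∧ y ≠ z := by
  obtain ⟨hne, hcov⟩ := hP
  by_cases huniv : (Set.univ : Set Ω) ∈ P
  · exfalso; apply hnt; left
    ext B
    simp only [Set.mem_singleton_iff]
    constructor
    · intro hB
      have hB0 : B.Nonempty := Set.nonempty_iff_ne_empty.2 (fun h => hne (h ▸ hB))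
      obtain ⟨b, hb⟩ := hB0
      obtain ⟨C, ⟨hC, hbC⟩, huniq⟩ := hcov b
      have h1 : B = C := huniq B ⟨hB, hb⟩
      have h2 : Set.univ = C := huniq _ ⟨huniv, trivial⟩
      rw [h1, ← h2]
    · rintro rfl; exact huniv
  · by_cases hss : ∀ B ∈ P, B.Subsingleton
    · exfalso; apply hnt; right
      ext B
      simp only [Set.mem_range]
      constructor
      · intro hB
        have hB0 : B.Nonempty := Set.nonempty_iff_ne_empty.2 (fun h => hne (h ▸ hB))
        obtain ⟨b, hb⟩ := hB0
        exact ⟨b, ((hss B hB).eq_singleton_of_mem hb).symm⟩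
      · rintro ⟨x, rfl⟩
        obtain ⟨C, ⟨hC, hxC⟩, _⟩ := hcov x
        have hCx : C = {x} := (hss C hC).eq_singleton_of_mem hxC
        rwa [← hCx]
    · push_neg at hss
      obtain ⟨B, hB, hns⟩ := hss
      obtain ⟨x, hx, y, hy, hxy⟩ := hns
      have hBu : B ≠ Set.univ := fun h => huniv (h ▸ hB)
      obtain ⟨z, hz⟩ : ∃ z, z ∉ B := by
        by_contra h; push_neg at h; exact hBu (Set.eq_univ_of_forall h)
      exact ⟨x, y, z, hxy, fun h => hz (h ▸ hx), fun h => hz (h ▸ hy)⟩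

/-- Key lemma: a primitive group admits no nonempty invariant family of "edges"
(2-element sets), each meeting a set `T` in exactly one point. -/
lemma lemA (G : Subgroup (Equiv.Perm Ω))
    (htrans : ∀ a b : Ω, ∃ g ∈ G, g a = b)
    (hprim : ∀ P : Set (Set Ω), Setoid.IsPartition P → IsInvariantPartition G P →
      (P = {Set.univ} ∨ P = Set.range (fun x : Ω => ({x} : Set Ω))))
    (T : Set Ω) (E : Set (Set Ω)) (hEne : E.Nonempty)
    (hEinv : ∀ g ∈ G, ∀ e ∈ E, (⇑g) '' e ∈ E)
    (hE2 : ∀ e ∈ E, ∃ a b, a ≠ b ∧ e = {a, b} ∧ a ∈ T ∧ b ∉ T)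
    (h3 : ∃ x y z : Ω, x ≠ y ∧ x ≠ z ∧ y ≠ z) : False := by
  classical
  set adj : Ω → Ω → Prop := fun x y => x ≠ y ∧ ∃ e ∈ E, x ∈ e ∧ y ∈ e with hadjdef
  have adj_symm : ∀ x y, adj x y → adj y x :=
    fun x y ⟨h, e, he, hx, hy⟩ => ⟨h.symm, e, he, hy, hx⟩
  have adj_T : ∀ x y, adj x y → (x ∈ T ↔ y ∉ T) := by
    rintro x y ⟨hxy, e, he, hx, hy⟩
    obtain ⟨a, b, hab, heq, haT, hbT⟩ := hE2 e he
    subst heq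
    simp only [Set.mem_insert_iff, Set.mem_singleton_iff] at hx hy
    rcases hx with rfl | rfl <;> rcases hy with rfl | rfl <;> tauto
  have adj_g : ∀ g ∈ G, ∀ x y, adj x y → adj (g x) (g y) := by
    rintro g hg x y ⟨hxy, e, he, hx, hy⟩
    exact ⟨fun h => hxy (g.injective h), (⇑g) '' e, hEinv g hg e he, ⟨x, hx, rfl⟩, ⟨y, hy, rfl⟩⟩
  set R2 : Ω → Ω → Prop := fun x y => ∃ w, adj x w ∧ adj w y with hR2def
  set r : Ω → Ω → Prop := Relation.ReflTransGen R2 with hrdef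
  have r_symm : Symmetric r := by
    intro x y h
    induction h with
    | refl => exact Relation.ReflTransGen.refl
    | tail _ h2 ih =>
        obtain ⟨w, h1, h2⟩ := h2
        exact Relation.ReflTransGen.head ⟨w, adj_symm _ _ h2, adj_symm _ _ h1⟩ ih
  have r_g : ∀ g ∈ G, ∀ x y, r x y → r (g x) (g y) := by
    intro g hg x y h
    induction h with
    | refl => exact Relation.ReflTransGen.refl
    | tail _ h2 ih =>
        obtain ⟨w, ha, hb⟩ := h2
        exact ih.tail ⟨g w, adj_g g hg _ _ ha, adj_g g hg _ _ hb⟩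
  have r_T : ∀ x y, r x y → (x ∈ T ↔ y ∈ T) := by
    intro x y h
    induction h with
    | refl => rfl
    | tail _ h2 ih =>
        obtain ⟨w, ha, hb⟩ := h2
        have h1 := adj_T _ _ ha
        have h2 := adj_T _ _ hb
        tauto
  set s : Setoid Ω := ⟨r, ⟨fun _ => Relation.ReflTransGen.refl,
    fun h => r_symm h, fun h1 h2 => h1.trans h2⟩⟩ with hsdef
  have hclass : ∀ y : Ω, {x | r x y} ∈ s.classes := fun y => ⟨y, rfl⟩
  have hQinv : IsInvariantPartition G s.classes := by
    rintro g hg B ⟨y, rfl⟩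
    refine ⟨g y, ?_⟩
    ext z
    simp only [Set.mem_image, Set.mem_setOf_eq]
    constructor
    · rintro ⟨x, hx, rfl⟩
      exact r_g g hg _ _ hx
    · intro hz
      refine ⟨g⁻¹ z, ?_, by simp⟩
      have := r_g g⁻¹ (inv_mem hg) _ _ hz
      have h' : r (g⁻¹ z) y := by simpa using this
      exact h'
  have hQtriv := hprim s.classes (Setoid.isPartition_classes s) hQinv
  obtain ⟨e0, he0⟩ := hEne
  obtain ⟨a0, b0, hab0, he0eq, ha0T, hb0T⟩ := hE2 e0 he0
  rcases hQtriv with hQ | hQ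
  · -- classes = {univ} : impossible since classes lie in T or Tᶜ
    have huniv : (Set.univ : Set Ω) ∈ s.classes := hQ ▸ rfl
    obtain ⟨y, hy⟩ := huniv
    have hall : ∀ x : Ω, r x y := fun x => by
      have : x ∈ (Set.univ : Set Ω) := trivial
      rwa [hy] at this
    have h1 := r_T _ _ (hall a0)
    have h2 := r_T _ _ (hall b0)
    tauto
  · -- classes are singletons : r collapses to equality
    have hsing : ∀ x y, r x y → x = y := by
      intro x y h
      have := hclass y
      rw [hQ] at this
      obtain ⟨z, hz⟩ := this
      have hyz : y = z := by
        have hy : y ∈ {x | r x y} := Relation.ReflTransGen.refl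
        rw [← hz] at hy; simpa using hy
      have hxz : x = z := by
        have hx : x ∈ {x' | r x' y} := h
        rw [← hz] at hx; simpa using hx
      rw [hxz, hyz]
    have key : ∀ x y y', adj x y → adj x y' → y = y' := by
      intro x y y' h1 h2
      exact hsing y y' (Relation.ReflTransGen.single ⟨x, adj_symm _ _ h1, h2⟩)
    have other : ∀ e ∈ E, ∀ x ∈ e, ∃ y, adj x y ∧ e = {x, y} := by
      intro e he x hx
      obtain ⟨a, b, hab, rfl, _, _⟩ := hE2 e he
      simp only [Set.mem_insert_iff, Set.mem_singleton_iff] at hx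
      rcases hx with rfl | rfl
      · exact ⟨b, ⟨hab, {x, b}, he, by simp, by simp⟩, rfl⟩
      · exact ⟨a, ⟨hab.symm, {a, x}, he, by simp, by simp⟩, Set.pair_comm a x⟩
    have hEpart : Setoid.IsPartition E := by
      constructor
      · intro h
        obtain ⟨a, b, _, heq, _, _⟩ := hE2 ∅ h
        have : a ∈ (∅ : Set Ω) := by rw [heq]; simp
        exact this
      · intro x
        obtain ⟨g, hg, hga⟩ := htrans a0 x
        have hmem : x ∈ (⇑g) '' e0 := ⟨a0, by rw [he0eq]; simp, hga⟩
        have hgE : (⇑g) '' e0 ∈ E := hEinv g hg e0 he0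
        refine ⟨(⇑g) '' e0, ⟨hgE, hmem⟩, ?_⟩
        rintro e' ⟨he', hxe'⟩
        obtain ⟨y, hxy, heq⟩ := other _ hgE x hmem
        obtain ⟨y', hxy', heq'⟩ := other e' he' x hxe'
        rw [heq', heq, key x y' y hxy' hxy]
    have hEtriv := hprim E hEpart hEinv
    rcases hEtriv with hE | hE
    · -- E = {univ} : then Ω = {a0, b0}, contradicting three distinct points
      have : e0 = Set.univ := by rw [hE] at he0; exact he0
      obtain ⟨x, y, z, hxy, hxz, hyz⟩ := h3
      have hmem : ∀ w : Ω, w = a0 ∨ w = b0 := by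
        intro w
        have : w ∈ e0 := this ▸ trivial
        rw [he0eq] at this
        simpa using this
      rcases hmem x with hx | hx <;> rcases hmem y with hy | hy <;>
        rcases hmem z with hz' | hz' <;>
        first
        | exact hxy (hx.trans hy.symm)
        | exact hxz (hx.trans hz'.symm)
        | exact hyz (hy.trans hz'.symm)
    · -- E = singletons : but e0 is a pair
      rw [hE] at he0
      obtain ⟨c, hc⟩ := he0
      simp only at hc
      have ha : a0 ∈ ({c} : Set Ω) := by rw [hc, he0eq]; simp
      have hb : b0 ∈ ({c} : Set Ω) := by rw [hc, he0eq]; simp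
      simp only [Set.mem_singleton_iff] at ha hb
      exact hab0 (ha.trans hb.symm)

/-- Transport of a unique-intersection property along a permutation. -/
lemma section_image (g : Equiv.Perm Ω) (S B : Set Ω)
    (h : ∃! w, w ∈ (⇑g⁻¹) '' S ∧ w ∈ B) : ∃! w, w ∈ S ∧ w ∈ (⇑g) '' B := by
  obtain ⟨w, ⟨⟨t, htS, htw⟩, hwB⟩, huniq⟩ := h
  refine ⟨g w, ⟨?_, ⟨w, hwB, rfl⟩⟩, ?_⟩
  · rw [← htw]; simpa using htS
  · rintro v ⟨hvS, u, huB, rfl⟩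
    have hu : u = w := huniq u ⟨⟨g u, hvS, by simp⟩, huB⟩
    rw [hu]

/-- A pair meeting `S` in exactly one point can be written `{a, b}` with
`a ∈ S`, `b ∉ S`. -/
lemma pair_section {u v : Ω} (huv : u ≠ v) {S : Set Ω}
    (h : ∃! w, w ∈ S ∧ w ∈ ({u, v} : Set Ω)) :
    ∃ a b, a ≠ b ∧ ({u, v} : Set Ω) = {a, b} ∧ a ∈ S ∧ b ∉ S := by
  obtain ⟨w, ⟨hwS, hw⟩, huniq⟩ := h
  simp only [Set.mem_insert_iff, Set.mem_singleton_iff] at hw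
  rcases hw with rfl | rfl
  · exact ⟨w, v, huv, rfl, hwS, fun hv => huv ((huniq v ⟨hv, by simp⟩).symm)⟩
  · exact ⟨w, u, huv.symm, Set.pair_comm u w, hwS,
      fun hu => huv (huniq u ⟨hu, by simp⟩)⟩

end AuxLemmas

/-- A non-trivial `G`-regular partition for a primitive group has at least 3 parts,
each of size at least 3. -/
theorem stmt1 {Ω : Type*} [Finite Ω] (G : Subgroup (Equiv.Perm Ω))
    (hG : IsPrimitivePermGroup G) (P : Set (Set Ω)) (hP : Setoid.IsPartition P)
    (hreg : IsGRegular G P) (hnt : ¬ IsTrivialPartition P) :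
    3 ≤ P.ncard ∧ ∀ B ∈ P, 3 ≤ B.ncard := by
  classical
  obtain ⟨S, hS, hSg⟩ := hreg
  obtain ⟨htrans, hprim⟩ := hG
  have hnt' : ¬ (P = {Set.univ} ∨ P = Set.range (fun x : Ω => ({x} : Set Ω))) := hnt
  have h3 := exists_three_distinct hP hnt'
  obtain ⟨hne, hcov⟩ := hP
  have hprim' : ∀ Q : Set (Set Ω), Setoid.IsPartition Q → IsInvariantPartition G Q →
      (Q = {Set.univ} ∨ Q = Set.range (fun x : Ω => ({x} : Set Ω))) :=
    fun Q h1 h2 => hprim Q h1 h2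
  -- no singleton parts
  have hno1 : ∀ b : Ω, ({b} : Set Ω) ∈ P → False := by
    intro b hb
    have hbS : b ∈ S := by
      obtain ⟨w, ⟨hwS, hwb⟩, _⟩ := hS {b} hb
      rw [Set.mem_singleton_iff] at hwb
      rwa [← hwb]
    have hSuniv : S = Set.univ := by
      apply Set.eq_univ_of_forall
      intro y
      obtain ⟨g, hg, hgy⟩ := htrans y b
      obtain ⟨w, ⟨⟨t, htS, htw⟩, hwb⟩, _⟩ := hSg g hg {b} hb
      rw [Set.mem_singleton_iff] at hwb
      have : t = y := g.injective (by rw [htw, hwb, hgy])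
      rwa [← this]
    apply hnt'
    right
    ext B
    simp only [Set.mem_range]
    constructor
    · intro hB
      obtain ⟨x, ⟨hxS, hxB⟩, huniq⟩ := hS B hB
      refine ⟨x, ?_⟩
      ext z
      simp only [Set.mem_singleton_iff]
      constructor
      · rintro rfl; exact hxB
      · intro hz; exact (huniq z ⟨by rw [hSuniv]; trivial, hz⟩)
    · rintro ⟨x, rfl⟩
      obtain ⟨B, ⟨hB, hxB⟩, _⟩ := hcov x
      obtain ⟨w, hw, huniq⟩ := hS B hB
      have hBx : B = {x} := by
        ext z
        simp only [Set.mem_singleton_iff]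
        constructor
        · intro hz
          have h1 := huniq z ⟨by rw [hSuniv]; trivial, hz⟩
          have h2 := huniq x ⟨by rw [hSuniv]; trivial, hxB⟩
          rw [h1, h2]
        · rintro rfl; exact hxB
      rwa [← hBx]
  -- every part has at least 3 elements
  have hsize : ∀ B ∈ P, 3 ≤ B.ncard := by
    intro B hB
    by_contra hlt
    push_neg at hlt
    have hc : B.ncard = 0 ∨ B.ncard = 1 ∨ B.ncard = 2 := by omega
    rcases hc with hc | hc | hc
    · rw [Set.ncard_eq_zero] at hc
      exact hne (hc ▸ hB)
    · obtain ⟨b, rfl⟩ := Set.ncard_eq_one.1 hc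
      exact hno1 b hB
    · obtain ⟨x, y, hxy, hBeq⟩ := Set.ncard_eq_two.1 hc
      subst hBeq
      refine lemA G htrans hprim' S {e | ∃ g ∈ G, e = (⇑g) '' ({x, y} : Set Ω)}
        ⟨{x, y}, 1, one_mem G, by simp⟩ ?_ ?_ h3
      · rintro g hg e ⟨h, hh, rfl⟩
        refine ⟨g * h, mul_mem hg hh, ?_⟩
        rw [Set.image_image]
        rfl
      · rintro e ⟨g, hg, rfl⟩
        rw [Set.image_pair]
        apply pair_section (fun h => hxy (g.injective h))
        have hsec := section_image g S {x, y} (hSg g⁻¹ (inv_mem hg) {x, y} hB)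
        rwa [Set.image_pair] at hsec
  refine ⟨?_, hsize⟩
  -- at least 3 parts
  by_contra hlt
  push_neg at hlt
  have hc : P.ncard = 0 ∨ P.ncard = 1 ∨ P.ncard = 2 := by omega
  obtain ⟨x0, y0, z0, _, _, _⟩ := id h3
  rcases hc with hc | hc | hc
  · rw [Set.ncard_eq_zero] at hc
    obtain ⟨D, ⟨hD, _⟩, _⟩ := hcov x0
    rw [hc] at hD
    exact hD
  · obtain ⟨B, hPeq⟩ := Set.ncard_eq_one.1 hc
    have hBuniv : B = Set.univ := by
      apply Set.eq_univ_of_forall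
      intro w
      obtain ⟨D, ⟨hD, hwD⟩, _⟩ := hcov w
      rw [hPeq, Set.mem_singleton_iff] at hD
      rwa [← hD]
    exact hnt' (Or.inl (by rw [hPeq, hBuniv]))
  · obtain ⟨B, C, hBC, hPeq⟩ := Set.ncard_eq_two.1 hc
    have hBP : B ∈ P := by rw [hPeq]; exact Set.mem_insert B {C}
    have hCP : C ∈ P := by rw [hPeq]; exact Set.mem_insert_iff.2 (Or.inr rfl)
    refine lemA G htrans hprim' B {e | ∃ g ∈ G, e = (⇑g) '' S}
      ⟨S, 1, one_mem G, by simp⟩ ?_ ?_ h3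
    · rintro g hg e ⟨h, hh, rfl⟩
      refine ⟨g * h, mul_mem hg hh, ?_⟩
      rw [Set.image_image]
      rfl
    · rintro e ⟨g, hg, rfl⟩
      obtain ⟨a, ⟨haE, haB⟩, hauniq⟩ := hSg g hg B hBP
      obtain ⟨b, ⟨hbE, hbC⟩, hbuniq⟩ := hSg g hg C hCP
      have hBCdisj : ∀ w : Ω, w ∈ B → w ∈ C → False := by
        intro w hwB hwC
        obtain ⟨D, _, hu⟩ := hcov w
        exact hBC ((hu B ⟨hBP, hwB⟩).trans (hu C ⟨hCP, hwC⟩).symm)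
      refine ⟨a, b, fun h => hBCdisj a haB (h ▸ hbC), ?_, haB, fun h => hBCdisj b h hbC⟩
      ext z
      constructor
      · intro hz
        obtain ⟨D, ⟨hD, hzD⟩, _⟩ := hcov z
        rw [hPeq] at hD
        simp only [Set.mem_insert_iff, Set.mem_singleton_iff] at hD
        rcases hD with rfl | rfl
        · left; exact hauniq z ⟨hz, hzD⟩
        · right; exact hbuniq z ⟨hz, hzD⟩
      · rintro (rfl | rfl)
        · exact haE
        · exact hbE
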